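/- Define Sign_{n,k,1}-bar as the set of nonzero sign vectors σ ∈ {0,+,-}^n with varbar(σ) = k whose first nonzero component at position i equals (-1)^{i-1}. Then for any two σ, τ ∈ Sign_{n,k,1}-bar, it is not the case that σ ≤ -τ, where σ ≤ τ means σ_i = τ_i for all i with σ_i ≠ 0. -/
import Mathlib


open scoped BigOperators

/-- Number of sign changes between consecutive entries of a list of reals. -/
noncomputable def listVar : List ℝ → ℕ
  | a :: b :: t => (if a * b < 0 then 1 else 0) + listVar (b :: t)
  | _ => 0

/-- `var v` : the number of sign changes of `v`, ignoring zero entries. -/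
noncomputable def var {n : ℕ} (v : Fin n → ℝ) : ℕ :=
  listVar ((List.ofFn v).filter (fun x => x ≠ 0))

/-- `varbar v` : the maximum of `var w` over all `w` agreeing with `v` on the
nonzero entries of `v`. -/
noncomputable def varbar {n : ℕ} (v : Fin n → ℝ) : ℕ :=
  sSup {m | ∃ w : Fin n → ℝ, (∀ i, v i ≠ 0 → w i = v i) ∧ var w = m}

/-- `altv v = (v 0, -v 1, v 2, ...)`. -/
def altv {n : ℕ} (v : Fin n → ℝ) : Fin n → ℝ := fun i => (-1 : ℝ) ^ (i : ℕ) * v i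

/-- A vector with entries in `{0, 1, -1}`, representing a sign vector. -/
def IsSignVec {n : ℕ} (σ : Fin n → ℝ) : Prop := ∀ i, σ i = 0 ∨ σ i = 1 ∨ σ i = -1

lemma listVar_nil : listVar [] = 0 := rfl
lemma listVar_single (a : ℝ) : listVar [a] = 0 := rfl
lemma listVar_cc (a b : ℝ) (t : List ℝ) :
    listVar (a :: b :: t) = (if a * b < 0 then 1 else 0) + listVar (b :: t) := rfl

lemma listVar_append_cons (l₁ : List ℝ) (b : ℝ) (l₂ : List ℝ) :
    listVar (l₁ ++ b :: l₂) = listVar (l₁ ++ [b]) + listVar (b :: l₂) := by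
  induction l₁ with
  | nil => simp [listVar_single]
  | cons a t ih =>
    cases t with
    | nil => simp [listVar_cc, listVar_single]
    | cons c t' =>
      simp only [List.cons_append, listVar_cc] at *
      omega

lemma listVar_le (l : List ℝ) : listVar l ≤ l.length - 1 := by
  induction l with
  | nil => simp [listVar_nil]
  | cons a t ih =>
    cases t with
    | nil => simp [listVar_single]
    | cons b t' =>
      simp only [listVar_cc, List.length_cons] at *
      split <;> omega

lemma listVar_even_iff : ∀ (l : List ℝ) (a : ℝ), a ≠ 0 → (∀ x ∈ l, x ≠ 0) →
    (Even (listVar (a :: l)) ↔ 0 < a * (a :: l).getLast (List.cons_ne_nil a l))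
  | [], a, ha, _ => by
      simp [listVar_single, mul_self_pos, ha]
  | b :: t, a, ha, hl => by
      have hb : b ≠ 0 := hl b (by simp)
      have ih := listVar_even_iff t b hb (fun x hx => hl x (by simp [hx]))
      have hlast : (a :: b :: t).getLast (List.cons_ne_nil _ _)
          = (b :: t).getLast (List.cons_ne_nil _ _) := by
        simp [List.getLast_cons]
      set L := (b :: t).getLast (List.cons_ne_nil b t) with hL
      have hLne : L ≠ 0 := hl _ (List.getLast_mem _)
      rw [listVar_cc, hlast]
      rcases lt_trichotomy (a * b) 0 with h | h | h
      · simp only [if_pos h, add_comm 1, Nat.even_add_one]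
        rw [ih]
        constructor
        · intro h2
          rcases (not_lt.mp h2).lt_or_eq with h3 | h3
          · nlinarith [mul_pos_of_neg_of_neg h h3, mul_self_pos.mpr hb]
          · exact absurd h3 (by positivity)
        · intro h2 h3
          nlinarith [mul_pos h2 h3, mul_self_pos.mpr hLne]
      · exact absurd h (by simp [mul_eq_zero, ha, hb])
      · simp only [if_neg (by linarith : ¬ a * b < 0), zero_add]
        rw [ih]
        constructor
        · intro h2; nlinarith [mul_pos h h2, mul_self_pos.mpr hb]
        · intro h2
          rcases lt_trichotomy (b * L) 0 with h3 | h3 | h3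
          · nlinarith [mul_pos h h2, mul_self_pos.mpr ha]
          · exact absurd h3 (by simp [mul_eq_zero, hb, hLne])
          · exact h3

lemma listVar_alt : ∀ (m s : ℕ), listVar (List.ofFn fun j : Fin m => (-1:ℝ)^(s+(j:ℕ))) = m - 1
  | 0, _ => by simp [listVar_nil]
  | 1, _ => by simp [listVar_single]
  | (m+2), s => by
      have ih := listVar_alt (m+1) (s+1)
      rw [List.ofFn_succ]
      have h1 : (List.ofFn fun j : Fin (m+1) => (-1:ℝ)^(s+((Fin.succ j : Fin (m+2)):ℕ)))
          = List.ofFn fun j : Fin (m+1) => (-1:ℝ)^(s+1+(j:ℕ)) := by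
        congr 1; funext j; congr 1; simp [Fin.val_succ]; omega
      rw [h1]
      rw [List.ofFn_succ] at ih ⊢
      simp only [Fin.val_zero, add_zero] at ih ⊢
      have hneg : ((-1:ℝ)^s) * ((-1:ℝ)^(s+1)) < 0 := by
        rw [← pow_add]
        have hodd : Odd (s + (s+1)) := ⟨s, by ring⟩
        rw [hodd.neg_one_pow]; norm_num
      rw [listVar_cc, if_pos hneg, ih]; omega

lemma listVar_neg : ∀ l : List ℝ, listVar (l.map (fun x => -x)) = listVar l
  | [] => rfl
  | [_] => rfl
  | a :: b :: t => by
      have ih := listVar_neg (b :: t)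
      simp only [List.map_cons] at ih ⊢
      rw [listVar_cc, listVar_cc, ih]
      congr 1
      simp [neg_mul_neg]

lemma var_neg {n : ℕ} (v : Fin n → ℝ) : var (fun i => -(v i)) = var v := by
  unfold var
  have h1 : List.ofFn (fun i => -(v i)) = (List.ofFn v).map (fun x => -x) := by
    rw [List.map_ofFn]; rfl
  rw [h1, List.filter_map]
  have h2 : ((fun x => decide (x ≠ 0)) ∘ fun x : ℝ => -x) = (fun x : ℝ => decide (x ≠ 0)) := by
    funext x; simp [Function.comp, neg_eq_zero]
  rw [h2, listVar_neg]

lemma var_le {n : ℕ} (v : Fin n → ℝ) : var v ≤ n := by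
  have h1 := listVar_le ((List.ofFn v).filter (fun x => x ≠ 0))
  have h2 : ((List.ofFn v).filter (fun x => x ≠ 0)).length ≤ n := by
    calc ((List.ofFn v).filter (fun x => x ≠ 0)).length ≤ (List.ofFn v).length :=
          List.length_filter_le _ _
      _ = n := by simp
  unfold var; omega

lemma varbar_nonempty {n : ℕ} (v : Fin n → ℝ) :
    {m | ∃ w : Fin n → ℝ, (∀ i, v i ≠ 0 → w i = v i) ∧ var w = m}.Nonempty :=
  ⟨var v, v, fun _ _ => rfl, rfl⟩

lemma varbar_bdd {n : ℕ} (v : Fin n → ℝ) :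
    BddAbove {m | ∃ w : Fin n → ℝ, (∀ i, v i ≠ 0 → w i = v i) ∧ var w = m} := by
  refine ⟨n, fun m hm => ?_⟩
  obtain ⟨w, _, hw⟩ := hm
  exact hw ▸ var_le w

/-- Three-way split of the filtered list at two nonzero positions. -/
lemma filter_ofFn_split {n : ℕ} (u : Fin n → ℝ) (j i : ℕ) (hji : j < i) (hin : i < n)
    (hj : u ⟨j, lt_trans hji hin⟩ ≠ 0) (hi : u ⟨i, hin⟩ ≠ 0) :
    ∃ F0 F1 : List ℝ,
      (List.ofFn u).filter (fun x => x ≠ 0)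
        = F0 ++ u ⟨j, lt_trans hji hin⟩ :: (F1 ++ u ⟨i, hin⟩ ::
            ((List.ofFn u).drop (i+1)).filter (fun x => x ≠ 0)) ∧
      F0.length ≤ j ∧ F1.length ≤ i - j - 1 ∧ (∀ x ∈ F1, x ≠ 0) := by
  classical
  set L := List.ofFn u with hLdef
  have hlen : L.length = n := by simp [hLdef]
  have hjn : j < n := lt_trans hji hin
  have hLj : L[j]'(by omega) = u ⟨j, hjn⟩ := by simp [hLdef]
  have hLi : L[i]'(by omega) = u ⟨i, hin⟩ := by simp [hLdef]
  have hdj : L.drop j = L[j]'(by omega) :: L.drop (j+1) :=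
    List.drop_eq_getElem_cons (by omega)
  have hdi : L.drop i = L[i]'(by omega) :: L.drop (i+1) :=
    List.drop_eq_getElem_cons (by omega)
  have h3 : (L.drop (j+1)).drop (i-j-1) = L.drop i := by
    rw [List.drop_drop]; congr 1; omega
  have h2 : L.drop (j+1) = (L.drop (j+1)).take (i-j-1) ++ (L[i]'(by omega) :: L.drop (i+1)) := by
    conv_lhs => rw [← List.take_append_drop (i-j-1) (L.drop (j+1))]
    rw [h3, hdi]
  have hsplit : L = L.take j ++ (L[j]'(by omega) ::
      ((L.drop (j+1)).take (i-j-1) ++ (L[i]'(by omega) :: L.drop (i+1)))) := by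
    conv_lhs => rw [← List.take_append_drop j L, hdj, h2]
  refine ⟨(L.take j).filter (fun x => x ≠ 0),
    ((L.drop (j+1)).take (i-j-1)).filter (fun x => x ≠ 0), ?_, ?_, ?_, ?_⟩
  · conv_lhs => rw [hsplit]
    rw [List.filter_append, List.filter_cons, List.filter_append, List.filter_cons]
    rw [hLj, hLi]
    simp [hj, hi]
  · calc ((L.take j).filter (fun x => x ≠ 0)).length ≤ (L.take j).length :=
        List.length_filter_le _ _
      _ ≤ j := by simp
  · calc (((L.drop (j+1)).take (i-j-1)).filter (fun x => x ≠ 0)).length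
        ≤ ((L.drop (j+1)).take (i-j-1)).length := List.length_filter_le _ _
      _ ≤ i - j - 1 := by simp
  · intro x hx
    have := List.of_mem_filter hx
    simpa using this

/-- The alternating prefix modification. -/
lemma var_alt_prefix {n : ℕ} (u : Fin n → ℝ) (i : ℕ) (hin : i < n)
    (hi : u ⟨i, hin⟩ = (-1:ℝ)^i) :
    var (fun m : Fin n => if (m:ℕ) < i then (-1:ℝ)^(m:ℕ) else u m)
      = i + listVar (u ⟨i, hin⟩ :: ((List.ofFn u).drop (i+1)).filter (fun x => x ≠ 0)) := by
  classical
  set w' : Fin n → ℝ := fun m => if (m:ℕ) < i then (-1:ℝ)^(m:ℕ) else u m with hw'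
  set Alt : List ℝ := List.ofFn (fun m : Fin i => (-1:ℝ)^(m:ℕ)) with hAlt
  have hlen : (List.ofFn w').length = n := by simp
  have htake : (List.ofFn w').take i = Alt := by
    apply List.ext_getElem
    · simp [hAlt]; omega
    · intro k h1 h2
      have hki : k < i := by simpa [hAlt] using h2
      rw [List.getElem_take]
      simp only [List.getElem_ofFn, hAlt, hw']
      simp [hki]
  have hdrop : (List.ofFn w').drop i = (List.ofFn u).drop i := by
    apply List.ext_getElem
    · simp
    · intro k h1 h2
      rw [List.getElem_drop, List.getElem_drop]
      simp only [List.getElem_ofFn, hw']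
      have : ¬ (i + k < i) := by omega
      simp [this]
  have hdi : (List.ofFn u).drop i = u ⟨i, hin⟩ :: (List.ofFn u).drop (i+1) := by
    rw [List.drop_eq_getElem_cons (by simp [hin])]
    simp
  have hsplit : List.ofFn w' = Alt ++ (u ⟨i, hin⟩ :: (List.ofFn u).drop (i+1)) := by
    conv_lhs => rw [← List.take_append_drop i (List.ofFn w')]
    rw [htake, hdrop, hdi]
  have hAltne : ∀ x ∈ Alt, x ≠ 0 := by
    intro x hx
    rw [hAlt, List.mem_ofFn] at hx
    obtain ⟨m, rfl⟩ := hx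
    positivity
  have hfAlt : Alt.filter (fun x => x ≠ 0) = Alt :=
    List.filter_eq_self.mpr (fun x hx => by simpa using hAltne x hx)
  have hui : u ⟨i, hin⟩ ≠ 0 := by rw [hi]; positivity
  have hfc : (u ⟨i, hin⟩ :: (List.ofFn u).drop (i+1)).filter (fun x => x ≠ 0)
      = u ⟨i, hin⟩ :: ((List.ofFn u).drop (i+1)).filter (fun x => x ≠ 0) := by
    rw [List.filter_cons]; simp [hui]
  unfold var
  rw [hsplit, List.filter_append, hfc, hfAlt]
  rw [listVar_append_cons]
  congr 1
  have hconcat : Alt ++ [u ⟨i, hin⟩] = List.ofFn (fun m : Fin (i+1) => (-1:ℝ)^(m:ℕ)) := by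
    rw [List.ofFn_succ']
    simp [hAlt, hi]
  rw [hconcat]
  have := listVar_alt (i+1) 0
  simpa using this

theorem stmt7 (n k : ℕ) (σ τ : Fin n → ℝ)
    (hσ1 : IsSignVec σ) (hτ1 : IsSignVec τ)
    (hσ0 : σ ≠ 0) (hτ0 : τ ≠ 0)
    (hσv : varbar σ = k) (hτv : varbar τ = k)
    (hσf : ∀ i : Fin n, (∀ j, j < i → σ j = 0) → σ i ≠ 0 → σ i = (-1 : ℝ) ^ (i : ℕ))
    (hτf : ∀ i : Fin n, (∀ j, j < i → τ j = 0) → τ i ≠ 0 → τ i = (-1 : ℝ) ^ (i : ℕ)) :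
    ¬ (∀ i, σ i ≠ 0 → σ i = -τ i) := by
  classical
  intro hc
  -- first nonzero index of σ
  have hσex : ∃ m : ℕ, ∃ h : m < n, σ ⟨m, h⟩ ≠ 0 := by
    obtain ⟨x, hx⟩ := Function.ne_iff.mp hσ0
    exact ⟨x.1, x.2, by simpa using hx⟩
  have hτex : ∃ m : ℕ, ∃ h : m < n, τ ⟨m, h⟩ ≠ 0 := by
    obtain ⟨x, hx⟩ := Function.ne_iff.mp hτ0
    exact ⟨x.1, x.2, by simpa using hx⟩
  set i := Nat.find hσex with hidef
  set j := Nat.find hτex with hjdef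
  obtain ⟨hin, hσI⟩ := Nat.find_spec hσex
  obtain ⟨hjn, hτJ⟩ := Nat.find_spec hτex
  set I : Fin n := ⟨i, hin⟩
  set J : Fin n := ⟨j, hjn⟩
  have hσmin : ∀ m : Fin n, (m : ℕ) < i → σ m = 0 := by
    intro m hm
    have := Nat.find_min hσex hm
    push_neg at this
    have h2 := this m.2
    simpa using h2
  have hτmin : ∀ m : Fin n, (m : ℕ) < j → τ m = 0 := by
    intro m hm
    have := Nat.find_min hτex hm
    push_neg at this
    have h2 := this m.2
    simpa using h2
  have hσIval : σ I = (-1:ℝ)^i := hσf I (fun m hm => hσmin m hm) hσI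
  have hτIne : τ I ≠ 0 := by
    intro h0
    apply hσI
    rw [hc I hσI, h0, neg_zero]
  have hji : j ≤ i := Nat.find_min' hτex ⟨hin, hτIne⟩
  have hτJval : τ J = (-1:ℝ)^j := hτf J (fun m hm => hτmin m hm) hτJ
  rcases eq_or_lt_of_le hji with heq | hlt
  · -- j = i : direct sign contradiction
    have hJI : J = I := by simp [I, J, heq]
    have h1 : σ I = -τ I := hc I hσI
    have h2 : τ I = (-1:ℝ)^i := by rw [← hJI, hτJval, heq]
    rw [hσIval, h2] at h1
    have hne : ((-1:ℝ)^i) ≠ 0 := by positivity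
    have h3 : ((-1:ℝ)^i) = 0 := by linarith
    exact hne h3
  · -- j < i
    -- optimal completion w of τ with var w = k
    have hmem := Nat.sSup_mem (varbar_nonempty τ) (varbar_bdd τ)
    rw [show sSup {m | ∃ w : Fin n → ℝ, (∀ i, τ i ≠ 0 → w i = τ i) ∧ var w = m} = varbar τ
      from rfl, hτv] at hmem
    obtain ⟨w, hwτ, hwk⟩ := hmem
    set u : Fin n → ℝ := fun m => -(w m) with hu
    have hvaru : var u = k := by rw [hu, var_neg]; exact hwk
    have huI : u ⟨i, hin⟩ = (-1:ℝ)^i := by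
      show -(w I) = (-1:ℝ)^i
      rw [hwτ I hτIne, ← hc I hσI, hσIval]
    have huJ : u ⟨j, lt_trans hlt hin⟩ = -((-1:ℝ)^j) := by
      show -(w J) = -((-1:ℝ)^j)
      rw [hwτ J hτJ, hτJval]
    have huJne : u ⟨j, lt_trans hlt hin⟩ ≠ 0 := by
      rw [huJ]
      have : ((-1:ℝ)^j) ≠ 0 := by positivity
      simpa using this
    have huIne : u ⟨i, hin⟩ ≠ 0 := by rw [huI]; positivity
    obtain ⟨F0, F1, hdecomp, hF0len, hF1len, hF1ne⟩ :=
      filter_ofFn_split u j i hlt hin huJne huIne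
    set F2 : List ℝ := ((List.ofFn u).drop (i+1)).filter (fun x => x ≠ 0) with hF2
    -- upper bound on k
    have hvaru2 : var u = listVar (F0 ++ [u ⟨j, lt_trans hlt hin⟩])
        + (listVar ((u ⟨j, lt_trans hlt hin⟩ :: F1) ++ [u ⟨i, hin⟩])
          + listVar (u ⟨i, hin⟩ :: F2)) := by
      unfold var
      rw [hdecomp, listVar_append_cons]
      congr 1
      rw [show (u ⟨j, lt_trans hlt hin⟩ :: (F1 ++ u ⟨i, hin⟩ :: F2))
        = (u ⟨j, lt_trans hlt hin⟩ :: F1) ++ u ⟨i, hin⟩ :: F2 by simp]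
      rw [listVar_append_cons]
    set A := listVar (F0 ++ [u ⟨j, lt_trans hlt hin⟩]) with hA
    set B := listVar ((u ⟨j, lt_trans hlt hin⟩ :: F1) ++ [u ⟨i, hin⟩]) with hB
    set C := listVar (u ⟨i, hin⟩ :: F2) with hC
    have hAle : A ≤ j := by
      have h1 := listVar_le (F0 ++ [u ⟨j, lt_trans hlt hin⟩])
      have h2 : (F0 ++ [u ⟨j, lt_trans hlt hin⟩]).length = F0.length + 1 := by simp
      omega
    have hBle : B ≤ i - j := by
      have h1 := listVar_le ((u ⟨j, lt_trans hlt hin⟩ :: F1) ++ [u ⟨i, hin⟩])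
      have h2 : ((u ⟨j, lt_trans hlt hin⟩ :: F1) ++ [u ⟨i, hin⟩]).length = F1.length + 2 := by
        simp
      omega
    -- parity of B
    have hBpar : Even B ↔ 0 < u ⟨j, lt_trans hlt hin⟩ * u ⟨i, hin⟩ := by
      have hne : ∀ x ∈ F1 ++ [u ⟨i, hin⟩], x ≠ 0 := by
        intro x hx
        rcases List.mem_append.mp hx with h | h
        · exact hF1ne x h
        · simp at h; subst h; exact huIne
      have := listVar_even_iff (F1 ++ [u ⟨i, hin⟩]) (u ⟨j, lt_trans hlt hin⟩) huJne hne
      rw [hB, show (u ⟨j, lt_trans hlt hin⟩ :: F1) ++ [u ⟨i, hin⟩]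
        = u ⟨j, lt_trans hlt hin⟩ :: (F1 ++ [u ⟨i, hin⟩]) by simp]
      rw [this]
      congr! 2
      rw [List.getLast_cons (by simp)]
      simp
    have hprod : u ⟨j, lt_trans hlt hin⟩ * u ⟨i, hin⟩ = -((-1:ℝ)^(i+j)) := by
      rw [huJ, huI, pow_add]; ring
    have hBodd : Even B ↔ Odd (i + j) := by
      rw [hBpar, hprod]
      rcases Nat.even_or_odd (i + j) with h | h
      · rw [h.neg_one_pow]
        norm_num
        exact h
      · rw [h.neg_one_pow]
        norm_num
        exact h
    have hBle' : B ≤ i - j - 1 := by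
      rw [Nat.even_iff, Nat.odd_iff] at hBodd
      omega
    have hk_ub : k ≤ i - 1 + C := by
      rw [← hvaru, hvaru2]
      omega
    -- lower bound via alternating prefix
    have hw'eq := var_alt_prefix u i hin huI
    have hw'mem : var (fun m : Fin n => if (m:ℕ) < i then (-1:ℝ)^(m:ℕ) else u m)
        ∈ {m | ∃ w : Fin n → ℝ, (∀ i, σ i ≠ 0 → w i = σ i) ∧ var w = m} := by
      refine ⟨_, ?_, rfl⟩
      intro m hm
      have hmge : ¬ ((m:ℕ) < i) := fun hlt' => hm (hσmin m hlt')
      simp only [if_neg hmge]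
      show -(w m) = σ m
      have hτm : τ m ≠ 0 := by
        intro h0
        apply hm
        rw [hc m hm, h0, neg_zero]
      rw [hwτ m hτm]
      exact (hc m hm).symm
    have hle : var (fun m : Fin n => if (m:ℕ) < i then (-1:ℝ)^(m:ℕ) else u m) ≤ k := by
      rw [← hσv]
      exact le_csSup (varbar_bdd σ) hw'mem
    rw [hw'eq, ← hF2] at hle
    -- hle : i + C ≤ k, hk_ub : k ≤ i - 1 + C, j < i so i ≥ 1
    omega
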